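/- Let A be a binary matrix with m rows and n columns, and let A' be obtained from A by appending a column of zeros. For any tour (cyclic ordering) v_{i_1},...,v_{i_{n+1}} of the columns of A', its length under the Hamming-distance metric (sum of Hamming distances between cyclically consecutive columns) equals 2·cons1(π(A)), where π is the column permutation of A obtained by reading the tour starting just after the zero column. -/

import Mathlib

open Finset
open Fin.NatCast

/-- Extend a row of length `n` by zeros to an `ℕ`-indexed row. -/
def rowExt (n : ℕ) (r : Fin n → Bool) : ℕ → Bool :=
  fun j => if h : j < n then r ⟨j, h⟩ else false

/-- The number of maximal blocks of consecutive ones in a row. -/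
def cons1Row (n : ℕ) (r : Fin n → Bool) : ℕ :=
  ((Finset.range n).filter
    (fun j => rowExt n r j = true ∧ (j = 0 ∨ rowExt n r (j - 1) = false))).card

/-- The total number of maximal blocks of consecutive ones in a binary matrix. -/
def cons1 {m n : ℕ} (A : Fin m → Fin n → Bool) : ℕ :=
  ∑ i, cons1Row n (A i)

/-- Append a column of zeros to the right of a binary matrix. -/
def appendZero {m n : ℕ} (A : Fin m → Fin n → Bool) : Fin m → Fin (n + 1) → Bool :=
  fun i j => if h : (j : ℕ) < n then A i ⟨j, h⟩ else false

/-- Hamming distance between two columns of a binary matrix. -/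
def colHam {m N : ℕ} (B : Fin m → Fin N → Bool) (a b : Fin N) : ℕ :=
  hammingDist (fun i => B i a) (fun i => B i b)

lemma card_01_eq_10 {N : ℕ} (g : Fin (N+1) → Bool) :
    (univ.filter fun t : Fin (N+1) => g t = false ∧ g (t+1) = true).card
      = (univ.filter fun t : Fin (N+1) => g t = true ∧ g (t+1) = false).card := by
  have key : ∑ t : Fin (N+1), ((if g t = false ∧ g (t+1) = true then (1:ℤ) else 0)
      - (if g t = true ∧ g (t+1) = false then (1:ℤ) else 0))
      = ∑ t : Fin (N+1), ((if g (t+1) = true then (1:ℤ) else 0) - (if g t = true then 1 else 0)) := by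
    refine Finset.sum_congr rfl fun t _ => ?_
    cases h1 : g t <;> cases h2 : g (t+1) <;> simp [h1, h2]
  have h2 : ∑ t : Fin (N+1), ((if g (t+1) = true then (1:ℤ) else 0) - (if g t = true then 1 else 0)) = 0 := by
    rw [Finset.sum_sub_distrib]
    rw [show ∑ t : Fin (N+1), (if g (t+1) = true then (1:ℤ) else 0)
        = ∑ t : Fin (N+1), (if g t = true then 1 else 0) from
      Fintype.sum_equiv (Equiv.addRight 1) _ _ (fun t => rfl)]
    ring
  rw [← key, Finset.sum_sub_distrib, sub_eq_zero] at h2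
  rw [Finset.sum_boole, Finset.sum_boole] at h2
  exact_mod_cast h2

lemma trans_sum {N : ℕ} (g : Fin (N+1) → Bool) :
    ∑ t : Fin (N+1), (if g t ≠ g (t+1) then 1 else 0)
      = 2 * (univ.filter fun t : Fin (N+1) => g t = false ∧ g (t+1) = true).card := by
  have h : ∀ t : Fin (N+1), (if g t ≠ g (t+1) then (1:ℕ) else 0)
      = (if g t = false ∧ g (t+1) = true then 1 else 0)
        + (if g t = true ∧ g (t+1) = false then 1 else 0) := by
    intro t; cases h1 : g t <;> cases h2 : g (t+1) <;> simp [h1,h2]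
  simp_rw [h]
  rw [Finset.sum_add_distrib, ← Finset.card_filter, ← Finset.card_filter,
    ← card_01_eq_10 g, two_mul]

lemma card_rise {n : ℕ} (r : Fin n → Bool) (g : Fin (n+1) → Bool)
    (hg0 : g 0 = false)
    (hgs : ∀ j : Fin n, g ⟨(j:ℕ)+1, Nat.succ_lt_succ j.isLt⟩ = r j) :
    (univ.filter fun t : Fin (n+1) => g t = false ∧ g (t+1) = true).card
      = cons1Row n r := by
  unfold cons1Row
  have hgval : ∀ (k : ℕ) (h : k < n), g ⟨k+1, Nat.succ_lt_succ h⟩ = rowExt n r k := by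
    intro k h
    have := hgs ⟨k, h⟩
    simpa [rowExt, h] using this
  refine Finset.card_bij (fun t _ => (t : ℕ)) ?_ ?_ ?_
  · intro t ht
    simp only [mem_filter, mem_univ, true_and] at ht ⊢
    obtain ⟨h0, h1⟩ := ht
    have htn : (t : ℕ) < n := by
      by_contra hc
      have : t = Fin.last n := by
        apply Fin.ext
        simpa [Fin.last] using le_antisymm (Nat.lt_succ_iff.mp t.isLt) (not_lt.mp hc)
      rw [this] at h1
      simp [Fin.last_add_one, hg0] at h1
    have htlast : t ≠ Fin.last n := by
      intro h; rw [h] at htn; simp [Fin.last] at htn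
    have hsucc : t + 1 = ⟨(t : ℕ) + 1, Nat.succ_lt_succ htn⟩ := by
      apply Fin.ext
      rw [Fin.val_add_one]
      simp [htlast]
    refine ⟨mem_range.mpr htn, ?_, ?_⟩
    · rw [← hgval _ htn, ← hsucc]; exact h1
    · rcases Nat.eq_zero_or_pos (t : ℕ) with h | h
      · exact Or.inl h
      · right
        have hlt : (t : ℕ) - 1 < n := lt_of_le_of_lt (Nat.sub_le _ _) htn
        rw [← hgval _ hlt]
        have : t = ⟨((t : ℕ) - 1) + 1, Nat.succ_lt_succ hlt⟩ := by
          apply Fin.ext; simp; omega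
        rw [← this]; exact h0
  · intro a ha b hb hab; exact Fin.ext hab
  · intro j hj
    simp only [mem_filter, mem_range] at hj
    obtain ⟨hjn, h1, h0⟩ := hj
    refine ⟨⟨j, lt_trans hjn (Nat.lt_succ_self n)⟩, ?_, rfl⟩
    simp only [mem_filter, mem_univ, true_and]
    constructor
    · rcases h0 with h | h
      · subst h
        have : (⟨0, _⟩ : Fin (n+1)) = 0 := rfl
        rw [this, hg0]
      · have hlt : j - 1 < n := lt_of_le_of_lt (Nat.sub_le _ _) hjn
        rcases Nat.eq_zero_or_pos j with hz | hz
        · subst hz; exact hg0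
        · have : (⟨j, lt_trans hjn (Nat.lt_succ_self n)⟩ : Fin (n+1))
              = ⟨(j-1)+1, Nat.succ_lt_succ hlt⟩ := by
            apply Fin.ext; simp; omega
          rw [this, hgval _ hlt]; exact h
    · have hne : (⟨j, lt_trans hjn (Nat.lt_succ_self n)⟩ : Fin (n+1)) ≠ Fin.last n := by
        intro h
        have := congrArg Fin.val h
        simp [Fin.last] at this
        omega
      have hsucc : (⟨j, lt_trans hjn (Nat.lt_succ_self n)⟩ : Fin (n+1)) + 1
          = ⟨j + 1, Nat.succ_lt_succ hjn⟩ := by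
        apply Fin.ext
        rw [Fin.val_add_one]
        simp [hne]
      rw [hsucc, hgval _ hjn]; exact h1

theorem stmt0 (m n : ℕ) (A : Fin m → Fin n → Bool)
    (σ : Equiv.Perm (Fin (n + 1))) (k₀ : Fin (n + 1))
    (hk : σ k₀ = Fin.last n)
    (π : Equiv.Perm (Fin n))
    (hπ : ∀ j : Fin n, ((σ (k₀ + ((((j : ℕ) + 1 : ℕ)) : Fin (n + 1)))) : ℕ) = (π j : ℕ)) :
    ∑ k : Fin (n + 1), colHam (appendZero A) (σ k) (σ (k + 1)) =
      2 * cons1 (fun i j => A i (π j)) := by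
  -- reindex the tour to start at k₀
  have hreindex : ∑ k : Fin (n+1), colHam (appendZero A) (σ k) (σ (k+1))
      = ∑ t : Fin (n+1), colHam (appendZero A) (σ (k₀ + t)) (σ (k₀ + (t+1))) := by
    refine (Fintype.sum_equiv (Equiv.addLeft k₀) _ _ (fun t => ?_)).symm
    simp [Equiv.addLeft, add_assoc]
  rw [hreindex]
  -- expand hamming distance and swap sums
  have hexp : ∀ t : Fin (n+1), colHam (appendZero A) (σ (k₀ + t)) (σ (k₀ + (t+1)))
      = ∑ i : Fin m, (if appendZero A i (σ (k₀ + t)) ≠ appendZero A i (σ (k₀ + (t+1))) then 1 else 0) := by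
    intro t
    rw [colHam, hammingDist, Finset.card_filter]
  simp_rw [hexp]
  rw [Finset.sum_comm]
  -- per-row identity
  rw [cons1, Finset.mul_sum]
  refine Finset.sum_congr rfl fun i _ => ?_
  set g : Fin (n+1) → Bool := fun t => appendZero A i (σ (k₀ + t)) with hg
  have hg0 : g 0 = false := by
    simp only [hg, add_zero, hk]
    simp [appendZero, Fin.last]
  have hgs : ∀ j : Fin n, g ⟨(j:ℕ)+1, Nat.succ_lt_succ j.isLt⟩ = (fun j => A i (π j)) j := by
    intro j
    have hcast : ((((j : ℕ) + 1 : ℕ)) : Fin (n + 1)) = ⟨(j:ℕ)+1, Nat.succ_lt_succ j.isLt⟩ := by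
      apply Fin.ext
      simp [Fin.val_natCast, Nat.mod_eq_of_lt (Nat.succ_lt_succ j.isLt)]
    have hv := hπ j
    rw [hcast] at hv
    have hlt : ((σ (k₀ + ⟨(j:ℕ)+1, Nat.succ_lt_succ j.isLt⟩)) : ℕ) < n := hv ▸ (π j).isLt
    simp only [hg, appendZero, dif_pos hlt]
    congr 1
    exact Fin.ext hv
  calc ∑ t : Fin (n+1), (if g t ≠ g (t+1) then 1 else 0)
      = 2 * (univ.filter fun t : Fin (n+1) => g t = false ∧ g (t+1) = true).card := trans_sum g
    _ = 2 * cons1Row n (fun j => A i (π j)) := by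
        rw [card_rise (fun j => A i (π j)) g hg0 hgs]
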